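/- arXiv:1903.03936 — 5 statements merged into one kernel-verified Lean document; each statement's English description precedes it below -/
import Mathlib

section
/- Let V = {v_1,...,v_N} ⊂ ℝ^d with N = m−q, mean v̄ = (1/N)Σ v_i, satisfying ‖v_i − v̄‖² ≤ ‖v̄‖² for all i, pairwise distinct with ‖v_i − v_j‖² ≥ β² for i ≠ j, and let 0 < ε with ε²‖v̄‖² ≤ β². Set u = −ε v̄ and let U consist of q copies of u, with m − 2q = 3. If N > 2(ε+2)²/ε² + 2, then the Krum score of u is strictly less than the Krum score of every v ∈ V, so Krum(V ∪ U) = −ε v̄. -/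
/-- The Krum score of the `i`-th of `m` vectors with `q` Byzantine workers:
the sum of the squared distances from `w i` to its `m - q - 2` nearest
neighbours among the other `m - 1` vectors. -/
private lemma list_sum_take_le : ∀ {l' l : List ℝ}, List.Sublist l' l → l.Pairwise (· ≤ ·) →
    (l.take l'.length).sum ≤ l'.sum := by
  intro l' l h
  induction h with
  | slnil => intro _; simp
  | @cons l₁ l₂ a h ih =>
    intro hs
    have hs2 : l₂.Pairwise (· ≤ ·) := hs.of_cons
    have ha : ∀ x ∈ l₂, a ≤ x := (List.pairwise_cons.mp hs).1
    rcases l₁ with _ | ⟨b, l₁⟩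
    · simp
    · have hlen : l₁.length + 1 ≤ l₂.length := by simpa using h.length_le
      have h2 : (l₂.take (l₁.length + 1)).sum ≤ (b :: l₁).sum := ih hs2
      have h3 : (l₂.take (l₁.length + 1)).sum
          = (l₂.take l₁.length).sum + l₂[l₁.length] :=
        List.sum_take_succ _ _ (by omega)
      have h4 : a ≤ l₂[l₁.length] := ha _ (List.getElem_mem _)
      rw [List.length_cons, List.take_succ_cons, List.sum_cons]
      linarith
  | @cons_cons l₁ l₂ a h ih =>
    intro hs
    rw [List.length_cons, List.take_succ_cons, List.sum_cons, List.sum_cons]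
    exact add_le_add_right (ih hs.of_cons) a

private lemma multiset_take_sum_le (s t : Multiset ℝ) (hts : t ≤ s) :
    ((s.sort (· ≤ ·)).take (Multiset.card t)).sum ≤ t.sum := by
  have h1 : (↑(t.sort (· ≤ ·)) : Multiset ℝ) ≤ ↑(s.sort (· ≤ ·)) := by
    rw [Multiset.sort_eq, Multiset.sort_eq]; exact hts
  have h2 : List.Sublist (t.sort (· ≤ ·)) (s.sort (· ≤ ·)) :=
    List.sublist_of_subperm_of_pairwise (Multiset.coe_le.mp h1)
      (Multiset.pairwise_sort _ _) (Multiset.pairwise_sort _ _)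
  have h3 := list_sum_take_le h2 (Multiset.pairwise_sort _ _)
  rwa [Multiset.length_sort, show (t.sort (· ≤ ·)).sum = t.sum by
    rw [← Multiset.sum_coe, Multiset.sort_eq]] at h3

private lemma le_multiset_take_sum (s : Multiset ℝ) (k : ℕ) (c : ℝ)
    (hk : k ≤ Multiset.card s) (hc : ∀ x ∈ s, c ≤ x) :
    (k : ℝ) * c ≤ ((s.sort (· ≤ ·)).take k).sum := by
  have hlen : ((s.sort (· ≤ ·)).take k).length = k := by
    rw [List.length_take, Multiset.length_sort]; omega
  have hmem : ∀ x ∈ (s.sort (· ≤ ·)).take k, c ≤ x := fun x hx =>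
    hc x ((Multiset.mem_sort (· ≤ ·)).mp (List.take_subset _ _ hx))
  have := List.card_nsmul_le_sum _ c hmem
  rwa [hlen, nsmul_eq_mul] at this

noncomputable def krumScore {E : Type*} [PseudoMetricSpace E] {m : ℕ} (q : ℕ)
    (w : Fin m → E) (i : Fin m) : ℝ :=
  ((((Finset.univ.erase i).val.map fun j => dist (w i) (w j) ^ 2).sort
      (· ≤ ·)).take (m - q - 2)).sum

set_option maxHeartbeats 1600000 in
/-- Krum attack theorem: with `m - 2q = 3`, `N = m - q = q + 3` correct
gradients `v_i` satisfying `‖v_i - v̄‖² ≤ ‖v̄‖²`, pairwise separated by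
`‖v_i - v_j‖² ≥ β² > 0`, and `q` Byzantine gradients all equal to `u = -ε v̄`
with `0 < ε`, `ε²‖v̄‖² ≤ β²`, if `N > 2(ε+2)²/ε² + 2` then the Krum score of
`u` is strictly below the Krum score of every correct gradient, so Krum
outputs `-ε v̄`. -/
theorem krum_attack
    {d q : ℕ} (hq : 1 ≤ q) (v : Fin (q + 3) → EuclideanSpace ℝ (Fin d))
    (vbar : EuclideanSpace ℝ (Fin d))
    (hvbar : vbar = ((q + 3 : ℝ))⁻¹ • ∑ i, v i)
    (hball : ∀ i, ‖v i - vbar‖ ^ 2 ≤ ‖vbar‖ ^ 2)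
    (β : ℝ) (hβ : 0 < β)
    (hdistinct : ∀ i j, i ≠ j → v i ≠ v j)
    (hsep : ∀ i j, i ≠ j → β ^ 2 ≤ ‖v i - v j‖ ^ 2)
    (ε : ℝ) (hε : 0 < ε) (hεβ : ε ^ 2 * ‖vbar‖ ^ 2 ≤ β ^ 2)
    (hN : ((q : ℝ) + 3) > 2 * (ε + 2) ^ 2 / ε ^ 2 + 2)
    (w : Fin (q + 3 + q) → EuclideanSpace ℝ (Fin d))
    (hw : w = fun i : Fin (q + 3 + q) => if h : (i : ℕ) < q + 3 then v ⟨i, h⟩ else (-ε) • vbar) :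
    (∀ i : Fin (q + 3 + q), q + 3 ≤ (i : ℕ) →
      ∀ j : Fin (q + 3 + q), (j : ℕ) < q + 3 →
        krumScore q w i < krumScore q w j) ∧
    ∃ k : Fin (q + 3 + q),
      (∀ j, krumScore q w k ≤ krumScore q w j) ∧ w k = (-ε) • vbar := by
  have hwb : ∀ j : Fin (q+3+q), q+3 ≤ (j:ℕ) → w j = (-ε) • vbar := by
    intro j hj; rw [hw]; simp only [dif_neg (by omega : ¬ (j:ℕ) < q+3)]
  have hwc : ∀ (j : Fin (q+3+q)) (h : (j:ℕ) < q+3), w j = v ⟨j, h⟩ := by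
    intro j h; rw [hw]; simp only [dif_pos h]
  have hvne : vbar ≠ 0 := by
    intro h0
    have hz : ∀ i, v i = 0 := by
      intro i
      have h1 := hball i
      rw [h0] at h1
      simp only [norm_zero, sub_zero] at h1
      have h2 : ‖v i‖ ^ 2 ≤ 0 := by simpa using h1
      have h3 : ‖v i‖ = 0 := by nlinarith [norm_nonneg (v i), sq_nonneg ‖v i‖]
      simpa using h3
    exact hdistinct ⟨0, by omega⟩ ⟨1, by omega⟩ (by simp [Fin.ext_iff]) (by rw [hz, hz])
  have hvb : 0 < ‖vbar‖ := norm_pos_iff.mpr hvne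
  have hb : ∀ i, ‖v i - vbar‖ ≤ ‖vbar‖ := by
    intro i
    nlinarith [hball i, norm_nonneg (v i - vbar), norm_nonneg vbar]
  have hdu : ∀ a : Fin (q+3), dist ((-ε) • vbar) (v a) ^ 2 ≤ (ε+2)^2 * ‖vbar‖^2 := by
    intro a
    have h1 : dist ((-ε) • vbar) (v a) = ‖(v a - vbar) + (1+ε) • vbar‖ := by
      rw [dist_eq_norm']
      congr 1
      module
    have h2 : ‖(v a - vbar) + (1+ε) • vbar‖ ≤ (ε+2) * ‖vbar‖ := by
      calc ‖(v a - vbar) + (1+ε) • vbar‖ ≤ ‖v a - vbar‖ + ‖(1+ε) • vbar‖ := norm_add_le _ _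
      _ ≤ ‖vbar‖ + (1+ε) * ‖vbar‖ := by
          rw [norm_smul, Real.norm_eq_abs, abs_of_pos (by linarith)]
          exact add_le_add_left (hb a) _
      _ = (ε+2) * ‖vbar‖ := by ring
    calc dist ((-ε) • vbar) (v a) ^ 2 ≤ ((ε+2) * ‖vbar‖)^2 := by
          rw [h1]; exact pow_le_pow_left₀ (norm_nonneg _) h2 2
    _ = (ε+2)^2 * ‖vbar‖^2 := by ring
  have hdl : ∀ a : Fin (q+3), ε^2 * ‖vbar‖^2 ≤ dist ((-ε) • vbar) (v a) ^ 2 := by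
    intro a
    have h1 : dist ((-ε) • vbar) (v a) = ‖(1+ε) • vbar - (vbar - v a)‖ := by
      rw [dist_eq_norm']
      congr 1
      module
    have h2 : ε * ‖vbar‖ ≤ dist ((-ε) • vbar) (v a) := by
      rw [h1]
      have h5 := norm_sub_norm_le ((1+ε) • vbar) (vbar - v a)
      have h3 : ‖(1+ε) • vbar‖ = (1+ε) * ‖vbar‖ := by
        rw [norm_smul, Real.norm_eq_abs, abs_of_pos (by linarith)]
      have h4 : ‖vbar - v a‖ ≤ ‖vbar‖ := by rw [norm_sub_rev]; exact hb a
      linarith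
    calc ε^2 * ‖vbar‖^2 = (ε * ‖vbar‖)^2 := by ring
    _ ≤ dist ((-ε) • vbar) (v a) ^ 2 := pow_le_pow_left₀ (by positivity) h2 2
  have m2 : q + 3 + q - q - 2 = q + 1 := by omega
  -- key1 : Byzantine scores are small
  have key1 : ∀ i : Fin (q+3+q), q+3 ≤ (i:ℕ) →
      krumScore q w i ≤ 2 * ((ε+2)^2 * ‖vbar‖^2) := by
    intro i hi
    have hwi : w i = (-ε) • vbar := hwb i hi
    set f : Fin (q+3+q) → ℝ := fun j => dist (w i) (w j) ^ 2 with hf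
    set s : Multiset ℝ := (Finset.univ.erase i).val.map f with hs
    set j₀ : Fin (q+3+q) := ⟨0, by omega⟩ with hj₀
    set j₁ : Fin (q+3+q) := ⟨1, by omega⟩ with hj₁
    set Byz : Finset (Fin (q+3+q)) :=
      Finset.image (fun k : Fin q => (⟨q+3+(k:ℕ), by omega⟩ : Fin (q+3+q))) Finset.univ with hByz
    have hmemByz : ∀ j : Fin (q+3+q), j ∈ Byz ↔ q+3 ≤ (j:ℕ) := by
      intro j
      rw [hByz, Finset.mem_image]
      constructor
      · rintro ⟨k, -, rfl⟩; simp
      · intro hj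
        exact ⟨⟨(j:ℕ) - (q+3), by omega⟩, Finset.mem_univ _, by ext; simp; omega⟩
    set A : Finset (Fin (q+3+q)) := (Byz.erase i) ∪ {j₀, j₁} with hA
    have hdisj : Disjoint (Byz.erase i) {j₀, j₁} := by
      rw [Finset.disjoint_left]
      intro a ha hb
      have h1 : q+3 ≤ (a:ℕ) := (hmemByz a).mp (Finset.mem_of_mem_erase ha)
      simp only [Finset.mem_insert, Finset.mem_singleton] at hb
      rcases hb with rfl | rfl
      · rw [hj₀] at h1; simp at h1
      · rw [hj₁] at h1; simp at h1
    have hiB : i ∈ Byz := (hmemByz i).mpr hi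
    have h01 : j₀ ≠ j₁ := by rw [hj₀, hj₁]; simp [Fin.ext_iff]
    have hinj : Function.Injective (fun k : Fin q => (⟨q+3+(k:ℕ), by omega⟩ : Fin (q+3+q))) := by
      intro a b hab
      have := congrArg Fin.val hab
      simp only at this
      exact Fin.ext (by omega)
    have hcardA : A.card = q + 1 := by
      rw [hA, Finset.card_union_of_disjoint hdisj, Finset.card_erase_of_mem hiB,
        Finset.card_pair h01, hByz, Finset.card_image_of_injective _ hinj,
        Finset.card_univ, Fintype.card_fin]
      omega
    have hsub : A ⊆ Finset.univ.erase i := by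
      intro a ha
      rw [Finset.mem_erase]
      refine ⟨?_, Finset.mem_univ _⟩
      rw [hA, Finset.mem_union] at ha
      rcases ha with ha | ha
      · exact Finset.ne_of_mem_erase ha
      · simp only [Finset.mem_insert, Finset.mem_singleton] at ha
        intro h
        rcases ha with rfl | rfl
        · rw [← h, hj₀] at hi; simp at hi
        · rw [← h, hj₁] at hi; simp at hi
    have hts : A.val.map f ≤ s := by
      rw [hs]; exact Multiset.map_le_map (Finset.val_le_iff.mpr hsub)
    have hcardt : Multiset.card (A.val.map f) = q+1 := by
      rw [Multiset.card_map]; exact hcardA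
    have hsum : (A.val.map f).sum ≤ 2 * ((ε+2)^2 * ‖vbar‖^2) := by
      have he : (A.val.map f).sum = ∑ a ∈ A, f a := rfl
      rw [he, hA, Finset.sum_union hdisj]
      have h1 : ∑ a ∈ Byz.erase i, f a = 0 := by
        apply Finset.sum_eq_zero
        intro a ha
        have ha' : q+3 ≤ (a:ℕ) := (hmemByz a).mp (Finset.mem_of_mem_erase ha)
        show dist (w i) (w a) ^ 2 = 0
        rw [hwi, hwb a ha', dist_self]
        norm_num
      rw [h1, zero_add, Finset.sum_pair h01]
      have b0 : f j₀ ≤ (ε+2)^2 * ‖vbar‖^2 := by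
        show dist (w i) (w j₀) ^ 2 ≤ _
        rw [hwi, hwc j₀ (by rw [hj₀]; simp)]
        exact hdu _
      have b1 : f j₁ ≤ (ε+2)^2 * ‖vbar‖^2 := by
        show dist (w i) (w j₁) ^ 2 ≤ _
        rw [hwi, hwc j₁ (by rw [hj₁]; simp)]
        exact hdu _
      linarith
    have hmain := multiset_take_sum_le s (A.val.map f) hts
    rw [hcardt] at hmain
    have hk : krumScore q w i = ((s.sort (· ≤ ·)).take (q+1)).sum := by
      unfold krumScore
      rw [m2, hs, hf]
    rw [hk]
    exact le_trans hmain hsum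
  -- key2 : correct scores are large
  have key2 : ∀ j : Fin (q+3+q), (j:ℕ) < q+3 →
      ((q:ℝ)+1) * (ε^2 * ‖vbar‖^2) ≤ krumScore q w j := by
    intro j hj
    set f : Fin (q+3+q) → ℝ := fun j' => dist (w j) (w j') ^ 2 with hf
    set s : Multiset ℝ := (Finset.univ.erase j).val.map f with hs
    have hcard : Multiset.card s = q + 1 + (q + 1) := by
      rw [hs, Multiset.card_map, ← Finset.card_def,
        Finset.card_erase_of_mem (Finset.mem_univ _), Finset.card_univ, Fintype.card_fin]
      omega
    have hc : ∀ x ∈ s, ε^2 * ‖vbar‖^2 ≤ x := by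
      intro x hx
      rw [hs, Multiset.mem_map] at hx
      obtain ⟨j', hj', rfl⟩ := hx
      rw [Finset.mem_val, Finset.mem_erase] at hj'
      show ε^2 * ‖vbar‖^2 ≤ dist (w j) (w j') ^ 2
      by_cases h : (j':ℕ) < q+3
      · have hne : (⟨(j:ℕ), hj⟩ : Fin (q+3)) ≠ ⟨(j':ℕ), h⟩ := by
          intro hcontra
          exact hj'.1 (Fin.ext (congrArg Fin.val hcontra).symm)
        rw [hwc j hj, hwc j' h, dist_eq_norm]
        exact le_trans hεβ (hsep _ _ hne)
      · rw [hwc j hj, hwb j' (by omega), dist_comm]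
        exact hdl _
    have hmain := le_multiset_take_sum s (q+1) (ε^2 * ‖vbar‖^2) (by omega) hc
    have hk : krumScore q w j = ((s.sort (· ≤ ·)).take (q+1)).sum := by
      unfold krumScore
      rw [m2, hs, hf]
    rw [hk]
    push_cast at hmain
    exact hmain
  -- key3 : numeric comparison
  have key3 : 2 * ((ε+2)^2 * ‖vbar‖^2) < ((q:ℝ)+1) * (ε^2 * ‖vbar‖^2) := by
    have hε2 : (0:ℝ) < ε^2 := by positivity
    have h1 : 2*(ε+2)^2 / ε^2 < (q:ℝ)+1 := by linarith
    rw [div_lt_iff₀ hε2] at h1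
    have hvb2 : (0:ℝ) < ‖vbar‖^2 := by positivity
    nlinarith [h1, hvb2]
  -- key4 : all Byzantine scores equal
  have key4 : ∀ i i' : Fin (q+3+q), q+3 ≤ (i:ℕ) → q+3 ≤ (i':ℕ) →
      krumScore q w i = krumScore q w i' := by
    intro i i' hi hi'
    have hwi := hwb i hi
    have hwi' := hwb i' hi'
    have e : (Finset.univ.erase i).val.map (fun j => dist (w i) (w j) ^ 2)
        = (Finset.univ.erase i').val.map (fun j => dist (w i') (w j) ^ 2) := by
      set g : Fin (q+3+q) → ℝ := fun j => dist ((-ε) • vbar) (w j) ^ 2 with hg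
      have h1 : (fun j => dist (w i) (w j) ^ 2) = g := by
        funext j; rw [hg]; simp only; rw [hwi]
      have h2 : (fun j => dist (w i') (w j) ^ 2) = g := by
        funext j; rw [hg]; simp only; rw [hwi']
      rw [h1, h2]
      have key : ∀ a : Fin (q+3+q), q+3 ≤ (a:ℕ) →
          (0:ℝ) ::ₘ (Finset.univ.erase a).val.map g = Finset.univ.val.map g := by
        intro a ha
        have hga : g a = 0 := by
          rw [hg]; simp only; rw [hwb a ha, dist_self]; norm_num
        rw [← hga, Finset.erase_val, ← Multiset.map_cons,
          Multiset.cons_erase (Finset.mem_val.mpr (Finset.mem_univ a))]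
      have := (key i hi).trans (key i' hi').symm
      exact (Multiset.cons_inj_right 0).mp this
    unfold krumScore
    rw [e]
  have main : ∀ i : Fin (q+3+q), q+3 ≤ (i:ℕ) →
      ∀ j : Fin (q+3+q), (j:ℕ) < q+3 → krumScore q w i < krumScore q w j := by
    intro i hi j hj
    calc krumScore q w i ≤ 2 * ((ε+2)^2 * ‖vbar‖^2) := key1 i hi
    _ < ((q:ℝ)+1) * (ε^2 * ‖vbar‖^2) := key3
    _ ≤ krumScore q w j := key2 j hj
  refine ⟨main, ⟨q+3, by omega⟩, ?_, hwb _ (Nat.le_refl _)⟩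
  intro j
  by_cases hj : (j:ℕ) < q+3
  · exact le_of_lt (main _ (Nat.le_refl _) j hj)
  · exact le_of_eq (key4 _ _ (Nat.le_refl _) (by omega))
end

section
/- Suppose q ≥ 2 Byzantine vectors are all equal to u, and m − q − 4 ≥ 0 with q ≥ m − q − 2. Then among the m − q − 2 nearest neighbors of u (within the other m − 1 vectors), at least m − q − 4 have distance zero from u, so KR(u) is at most the sum of the two largest of the remaining squared distances, i.e. KR(u) ≤ 2 max_i ‖v_i − u‖². -/
/-- If `q ≥ 2` Byzantine vectors are all equal to `u`, with `m - q - 4 ≥ 0`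
(`N ≥ 4`) and `q ≥ m - q - 2` (`q ≥ N - 2`), then among the `m - q - 2` nearest
neighbours of `u` at least `m - q - 4` are at distance zero (other copies of
`u`), so `KR(u) ≤ 2 max_i ‖v_i - u‖²`. -/
theorem krum_score_byzantine_upper_bound
    {d N q : ℕ} (hq2 : 2 ≤ q) (hN4 : 4 ≤ N) (hqN : N - 2 ≤ q)
    (v : Fin N → EuclideanSpace ℝ (Fin d)) (u : EuclideanSpace ℝ (Fin d))
    (w : Fin (N + q) → EuclideanSpace ℝ (Fin d))
    (hw : w = fun i : Fin (N + q) => if h : (i : ℕ) < N then v ⟨i, h⟩ else u) :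
    ∀ i : Fin (N + q), N ≤ (i : ℕ) →
      krumScore q w i
        ≤ 2 * Finset.univ.sup' ⟨⟨0, by omega⟩, Finset.mem_univ _⟩
            (fun j : Fin N => ‖v j - u‖ ^ 2) := by
  intro i hi
  set M : ℝ := Finset.univ.sup' ⟨⟨0, by omega⟩, Finset.mem_univ _⟩
      (fun j : Fin N => ‖v j - u‖ ^ 2) with hM
  have hwi : w i = u := by
    rw [hw]; simp only [dif_neg (by omega : ¬ (i : ℕ) < N)]
  have hM0 : (0:ℝ) ≤ M := by
    refine le_trans (by positivity) (Finset.le_sup' (fun j : Fin N => ‖v j - u‖ ^ 2)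
      (Finset.mem_univ (⟨0, by omega⟩ : Fin N)))
  set s : Multiset ℝ := (Finset.univ.erase i).val.map fun j => dist (w i) (w j) ^ 2 with hs
  set l : List ℝ := s.sort (· ≤ ·) with hl
  -- every element of l is nonneg and ≤ M
  have hmem : ∀ x ∈ l, 0 ≤ x ∧ x ≤ M := by
    intro x hx
    rw [hl, Multiset.mem_sort, hs, Multiset.mem_map] at hx
    obtain ⟨j, _, rfl⟩ := hx
    refine ⟨by positivity, ?_⟩
    by_cases h : (j : ℕ) < N
    · have hwj : w j = v ⟨j, h⟩ := by rw [hw]; simp only [dif_pos h]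
      rw [hwj, hwi, dist_eq_norm, norm_sub_rev]
      exact Finset.le_sup' (fun j : Fin N => ‖v j - u‖ ^ 2) (Finset.mem_univ _)
    · have hwj : w j = u := by rw [hw]; simp only [dif_neg h]
      rw [hwj, hwi, dist_self]
      simpa using hM0
  -- at least q - 1 zeros
  have hcount : q - 1 ≤ l.count 0 := by
    have hiIci : i ∈ Finset.Ici (⟨N, by omega⟩ : Fin (N + q)) := by
      simp [Finset.mem_Ici, Fin.le_def, hi]
    set B : Finset (Fin (N + q)) := (Finset.Ici (⟨N, by omega⟩ : Fin (N + q))).erase i with hB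
    have hBcard : B.card = q - 1 := by
      rw [hB, Finset.card_erase_of_mem hiIci, Fin.card_Ici]
      simp
    have hBsub : B ⊆ Finset.univ.erase i := by
      intro j hj
      rw [hB, Finset.mem_erase] at hj
      exact Finset.mem_erase.2 ⟨hj.1, Finset.mem_univ _⟩
    have hle : (B.val.map fun j => dist (w i) (w j) ^ 2) ≤ s :=
      Multiset.map_le_map (Finset.val_le_iff.2 hBsub)
    have hzeros : Multiset.count (0:ℝ) (B.val.map fun j => dist (w i) (w j) ^ 2) = q - 1 := by
      rw [Multiset.count_eq_card.2, Multiset.card_map]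
      · exact_mod_cast hBcard
      · intro x hx
        rw [Multiset.mem_map] at hx
        obtain ⟨j, hj, rfl⟩ := hx
        have hj2 : j ∈ B := Finset.mem_val.mp hj
        have hjN : N ≤ (j : ℕ) := by
          rw [hB, Finset.mem_erase, Finset.mem_Ici, Fin.le_def] at hj2
          exact hj2.2
        have : w j = u := by rw [hw]; simp only [dif_neg (by omega : ¬ (j : ℕ) < N)]
        rw [this, hwi, dist_self]
        norm_num
    calc q - 1 = Multiset.count (0:ℝ) (B.val.map fun j => dist (w i) (w j) ^ 2) := hzeros.symm
      _ ≤ Multiset.count 0 s := Multiset.count_le_of_le _ hle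
      _ = l.count 0 := by rw [hl, ← Multiset.coe_count, Multiset.sort_eq]
  have hsorted : l.Pairwise (· ≤ ·) := Multiset.pairwise_sort _ _
  -- all elements of l.take (q-1) are zero
  have hzero : ∀ x ∈ l.take (q - 1), x = 0 := by
    intro x hx
    by_cases h0 : (0:ℝ) ∈ l.drop (q - 1)
    · have h1 : x ≤ 0 := hsorted.rel_of_mem_take_of_mem_drop hx h0
      have h2 : 0 ≤ x := (hmem x (List.take_subset _ _ hx)).1
      linarith
    · have hcnt : l.count 0 = (l.take (q-1)).count 0 + (l.drop (q-1)).count 0 := by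
        conv_lhs => rw [← List.take_append_drop (q-1) l]
        rw [List.count_append]
      have hd0 : (l.drop (q-1)).count 0 = 0 := List.count_eq_zero.2 h0
      have hlen : (l.take (q-1)).length ≤ q - 1 := by
        rw [List.length_take]; omega
      have : (l.take (q-1)).count 0 = (l.take (q-1)).length := by
        have := List.count_le_length (l := l.take (q-1)) (a := (0:ℝ))
        omega
      exact (List.count_eq_length.1 this x hx).symm
  -- main computation
  have hkey : N + q - q - 2 = N - 2 := by omega
  rw [krumScore, hkey]
  have hsplit : (l.take (N - 2)).sum
      = ((l.take (N-2)).take (q-1)).sum + ((l.take (N-2)).drop (q-1)).sum := by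
    rw [← List.sum_append, List.take_append_drop]
  rw [← hs, ← hl] at *
  rw [hsplit]
  have h1 : ((l.take (N-2)).take (q-1)).sum = 0 := by
    apply List.sum_eq_zero
    intro x hx
    have : x ∈ l.take (q-1) := by
      rw [List.take_take] at hx
      exact (List.take_sublist_take_left (l := l) (Nat.min_le_left _ _)).subset hx
    exact hzero x this
  have h2 : ((l.take (N-2)).drop (q-1)).sum ≤ 2 * M := by
    have hlen2 : ((l.take (N-2)).drop (q-1)).length ≤ 2 := by
      rw [List.length_drop, List.length_take]
      omega
    have hub : ∀ x ∈ (l.take (N-2)).drop (q-1), x ≤ M := by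
      intro x hx
      exact (hmem x (List.take_subset _ _ (List.drop_subset _ _ hx))).2
    calc ((l.take (N-2)).drop (q-1)).sum
        ≤ ((l.take (N-2)).drop (q-1)).length • M := List.sum_le_card_nsmul _ _ hub
      _ = (((l.take (N-2)).drop (q-1)).length : ℝ) * M := by rw [nsmul_eq_mul]
      _ ≤ 2 * M := by
          apply mul_le_mul_of_nonneg_right _ hM0
          exact_mod_cast hlen2
  linarith
end

section
/- Let v_1,...,v_N ∈ ℝ^d satisfy ‖v_i − v_j‖² ≥ β² for all i ≠ j, and let the q Byzantine vectors all equal u with ‖v_i − u‖² ≥ ε²‖v̄‖² for all i, where ε²‖v̄‖² ≤ β². Then for every correct vector v_i, its Krum score satisfies KR(v_i) ≥ (m − q − 2) ε² ‖v̄‖². -/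
lemma list_mul_le_sum (c : ℝ) : ∀ (l : List ℝ), (∀ x ∈ l, c ≤ x) →
    (l.length : ℝ) * c ≤ l.sum := by
  intro l
  induction l with
  | nil => simp
  | cons a t ih =>
      intro h
      simp only [List.length_cons, List.sum_cons]
      push_cast
      have h1 : c ≤ a := h a (by simp)
      have h2 : (t.length : ℝ) * c ≤ t.sum := ih fun x hx => h x (by simp [hx])
      nlinarith

/-- If the correct gradients are pairwise separated by `‖v_i - v_j‖² ≥ β²`, the
`q` Byzantine vectors all equal `u` with `‖v_i - u‖² ≥ ε²‖v̄‖²` for all `i`, and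
`ε²‖v̄‖² ≤ β²`, then the Krum score of every correct vector is at least
`(m - q - 2) ε² ‖v̄‖²` (here `m = N + q`, so `m - q - 2 = N - 2`). -/
theorem krum_score_correct_lower_bound
    {d N q : ℕ} (hN : 2 ≤ N)
    (v : Fin N → EuclideanSpace ℝ (Fin d))
    (vbar : EuclideanSpace ℝ (Fin d))
    (hvbar : vbar = ((N : ℝ))⁻¹ • ∑ i, v i)
    (β ε : ℝ) (hε : 0 < ε)
    (hsep : ∀ i j, i ≠ j → β ^ 2 ≤ ‖v i - v j‖ ^ 2)
    (u : EuclideanSpace ℝ (Fin d))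
    (hu : ∀ i, ε ^ 2 * ‖vbar‖ ^ 2 ≤ ‖v i - u‖ ^ 2)
    (hεβ : ε ^ 2 * ‖vbar‖ ^ 2 ≤ β ^ 2)
    (w : Fin (N + q) → EuclideanSpace ℝ (Fin d))
    (hw : w = fun i : Fin (N + q) => if h : (i : ℕ) < N then v ⟨i, h⟩ else u) :
    ∀ j : Fin (N + q), (j : ℕ) < N →
      ((N - 2 : ℕ) : ℝ) * (ε ^ 2 * ‖vbar‖ ^ 2) ≤ krumScore q w j := by
  intro j hj
  set c := ε ^ 2 * ‖vbar‖ ^ 2 with hc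
  set s := (Finset.univ.erase j).val.map fun k => dist (w j) (w k) ^ 2 with hs
  set T := ((s.sort (· ≤ ·)).take (N + q - q - 2)) with hT
  have hwj : w j = v ⟨(j : ℕ), hj⟩ := by rw [hw]; simp [hj]
  -- every element of T is ≥ c
  have hTmem : ∀ x ∈ T, c ≤ x := by
    intro x hx
    have hx' : x ∈ s := by
      rw [← Multiset.mem_sort (· ≤ ·)]
      exact List.mem_of_mem_take hx
    rw [hs, Multiset.mem_map] at hx'
    obtain ⟨k, hk, rfl⟩ := hx'
    have hk' : k ∈ Finset.univ.erase j := hk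
    have hkj : k ≠ j := (Finset.mem_erase.mp hk').1
    rw [dist_eq_norm, hwj]
    by_cases hkN : (k : ℕ) < N
    · have hwk : w k = v ⟨(k : ℕ), hkN⟩ := by rw [hw]; simp [hkN]
      rw [hwk]
      refine le_trans hεβ (hsep _ _ ?_)
      intro hcon
      apply hkj
      simp only [Fin.mk.injEq] at hcon
      exact Fin.ext hcon.symm
    · have hwk : w k = u := by rw [hw]; simp [hkN]
      rw [hwk]
      exact hu _
  -- length of T
  have hlen : T.length = N - 2 := by
    rw [hT, List.length_take, Multiset.length_sort, hs, Multiset.card_map,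
      Finset.card_val, Finset.card_erase_of_mem (Finset.mem_univ j),
      Finset.card_univ, Fintype.card_fin]
    omega
  have := list_mul_le_sum c T hTmem
  rw [hlen] at this
  unfold krumScore
  exact this
end

section
/- Coordinate-wise median commutes with the attack construction: if for each coordinate j the Byzantine scalar values are all strictly less than the minimum of the correct j-th coordinates whenever the correct mean's j-th coordinate is positive (and strictly greater than the maximum if it is negative), then for each such coordinate j, the j-th coordinate of Median(V ∪ U) equals min_i (v_i)_j (resp. max_i (v_i)_j), where |V| = q+1 and |U| = q. -/
/-- The median of a multiset of reals: the middle element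
(for a multiset of cardinality `2q+1`, the `(q+1)`-st smallest element). -/
noncomputable def medianMultiset (s : Multiset ℝ) : ℝ :=
  (s.sort (· ≤ ·)).getD (s.card / 2) 0

lemma sort_add_of_lt (A B : Multiset ℝ) (h : ∀ b ∈ B, ∀ a ∈ A, b < a) :
    (A + B).sort (· ≤ ·) = B.sort (· ≤ ·) ++ A.sort (· ≤ ·) := by
  refine (fun hp hs => List.Perm.eq_of_pairwise' (Multiset.pairwise_sort _ _) hs hp) ?_ ?_
  · rw [← Multiset.coe_eq_coe, Multiset.sort_eq, ← Multiset.coe_add,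
      Multiset.sort_eq, Multiset.sort_eq, add_comm]
  · rw [List.pairwise_append]
    refine ⟨Multiset.pairwise_sort _ _, Multiset.pairwise_sort _ _, fun b hb a ha => ?_⟩
    rw [Multiset.mem_sort] at hb ha
    exact (h b hb a ha).le

lemma sorted_getD_mem {l : List ℝ} (h : 0 < l.length) (n : ℕ) (hn : n < l.length) :
    l.getD n 0 ∈ l := by
  rw [List.getD_eq_getElem _ _ hn]
  exact List.getElem_mem _

lemma sorted_getD_le {l : List ℝ} (hl : l.Pairwise (· ≤ ·)) (n : ℕ) (hn : n < l.length)
    {a : ℝ} (ha : a ∈ l) {k : ℕ} (hk : k < l.length) (hak : l.getD k 0 = a) (hkn : n ≤ k) :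
    l.getD n 0 ≤ a := by
  rw [List.getD_eq_getElem _ _ hn, ← hak, List.getD_eq_getElem _ _ hk]
  rcases eq_or_lt_of_le hkn with rfl | h
  · exact le_refl _
  · exact List.pairwise_iff_getElem.mp hl n k hn hk h

/-- Coordinate-wise median under the attack construction: with `q+1` correct
vectors `v_i` and `q` Byzantine vectors `u_k`, for a coordinate `j` where the
correct mean is positive and all Byzantine values are strictly below all
correct values, the `j`-th coordinate of `Median(V ∪ U)` is `min_i (v_i)_j`;
symmetrically, where the correct mean is negative and all Byzantine values are
strictly above, it is `max_i (v_i)_j`. -/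
theorem coordinatewise_median_attack
    {d q : ℕ} (v : Fin (q + 1) → Fin d → ℝ) (u : Fin q → Fin d → ℝ)
    (gbar : Fin d → ℝ)
    (hgbar : gbar = fun j => (∑ i, v i j) / (q + 1)) (j : Fin d) :
    (0 < gbar j → (∀ k i, u k j < v i j) →
      medianMultiset
          ((↑(List.ofFn fun i => v i j) : Multiset ℝ)
            + (↑(List.ofFn fun k => u k j) : Multiset ℝ))
        = Finset.univ.inf' ⟨0, Finset.mem_univ 0⟩ fun i => v i j) ∧
    (gbar j < 0 → (∀ k i, v i j < u k j) →
      medianMultiset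
          ((↑(List.ofFn fun i => v i j) : Multiset ℝ)
            + (↑(List.ofFn fun k => u k j) : Multiset ℝ))
        = Finset.univ.sup' ⟨0, Finset.mem_univ 0⟩ fun i => v i j) := by
  set A : Multiset ℝ := ↑(List.ofFn fun i => v i j) with hA
  set B : Multiset ℝ := ↑(List.ofFn fun k => u k j) with hB
  have hAcard : A.card = q + 1 := by simp [hA]
  have hBcard : B.card = q := by simp [hB]
  have hAmem : ∀ a, a ∈ A ↔ ∃ i, v i j = a := by
    intro a
    rw [hA, Multiset.mem_coe, List.mem_ofFn]
  have hBmem : ∀ b, b ∈ B ↔ ∃ k, u k j = b := by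
    intro b
    rw [hB, Multiset.mem_coe, List.mem_ofFn]
  have hAlen : (A.sort (· ≤ ·)).length = q + 1 := by
    rw [Multiset.length_sort, hAcard]
  have hBlen : (B.sort (· ≤ ·)).length = q := by
    rw [Multiset.length_sort, hBcard]
  constructor
  · intro _ hlt
    have h : ∀ b ∈ B, ∀ a ∈ A, b < a := by
      intro b hb a ha
      obtain ⟨k, rfl⟩ := (hBmem b).mp hb
      obtain ⟨i, rfl⟩ := (hAmem a).mp ha
      exact hlt k i
    have hsort := sort_add_of_lt A B h
    have hcard : (A + B).card = 2 * q + 1 := by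
      rw [Multiset.card_add, hAcard, hBcard]; ring
    have hidx : (A + B).card / 2 = q := by omega
    rw [medianMultiset, hsort, hidx,
      List.getD_append_right _ _ _ _ hBlen.le, hBlen, Nat.sub_self]
    -- now show (A.sort).getD 0 0 = inf'
    have hmem : (A.sort (· ≤ ·)).getD 0 0 ∈ A := by
      rw [← Multiset.mem_sort (· ≤ ·)]
      exact sorted_getD_mem (by omega) 0 (by omega)
    obtain ⟨i0, hi0⟩ := (hAmem _).mp hmem
    apply le_antisymm
    · apply Finset.le_inf'
      intro i _
      have hvi : v i j ∈ A := (hAmem _).mpr ⟨i, rfl⟩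
      rw [← Multiset.mem_sort (· ≤ ·)] at hvi
      obtain ⟨m, hm, hgm⟩ := List.getElem_of_mem hvi
      exact sorted_getD_le (Multiset.pairwise_sort _ _) 0 (by omega) hvi hm
        (by rw [List.getD_eq_getElem _ _ hm, hgm]) (Nat.zero_le _)
    · rw [← hi0]
      exact Finset.inf'_le (fun i => v i j) (Finset.mem_univ i0)
  · intro _ hlt
    have h : ∀ b ∈ A, ∀ a ∈ B, b < a := by
      intro b hb a ha
      obtain ⟨i, rfl⟩ := (hAmem b).mp hb
      obtain ⟨k, rfl⟩ := (hBmem a).mp ha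
      exact hlt k i
    have hsort := sort_add_of_lt B A h
    have hcard : (A + B).card = 2 * q + 1 := by
      rw [Multiset.card_add, hAcard, hBcard]; ring
    have hidx : (A + B).card / 2 = q := by omega
    have hcomm : A + B = B + A := add_comm A B
    rw [medianMultiset, hcomm, hsort, Multiset.card_add, hBcard, hAcard]
    have hidx2 : (q + (q + 1)) / 2 = q := by omega
    have hg := List.getD_append (A.sort (· ≤ ·)) (B.sort (· ≤ ·)) 0 q (by omega)
    rw [hidx2, hg]
    -- now show (A.sort).getD q 0 = sup'
    have hmem : (A.sort (· ≤ ·)).getD q 0 ∈ A := by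
      rw [← Multiset.mem_sort (· ≤ ·)]
      exact sorted_getD_mem (by omega) q (by omega)
    obtain ⟨i0, hi0⟩ := (hAmem _).mp hmem
    apply le_antisymm
    · rw [← hi0]
      exact Finset.le_sup' (fun i => v i j) (Finset.mem_univ i0)
    · apply Finset.sup'_le
      intro i _
      have hvi : v i j ∈ A := (hAmem _).mpr ⟨i, rfl⟩
      rw [← Multiset.mem_sort (· ≤ ·)] at hvi
      obtain ⟨m, hm, hgm⟩ := List.getElem_of_mem hvi
      have heq : (A.sort (· ≤ ·)).getD m 0 = v i j := by
        rw [List.getD_eq_getElem _ _ hm, hgm]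
      rw [← heq]
      exact sorted_getD_le (k := q) (Multiset.pairwise_sort _ _) m hm
        ((Multiset.mem_sort _).mpr hmem) (by omega) rfl (by omega)
end

section
/- Suppose the q Byzantine vectors are identical copies of u and q ≥ m − q − 2 ≥ 1. If additionally for all correct v_i we have KR(v_i) > KR(u), then the Krum aggregation outputs u, and hence if u = −ε v̄ with E[v̄] = g ≠ 0 and ε > 0, then ⟨g, E[Krum(V ∪ U)]⟩ = −ε‖g‖² < 0. -/
open MeasureTheory

/-- If the `q` Byzantine vectors are identical copies of `u = -ε v̄` with
`q ≥ m - q - 2 ≥ 1`, and every correct vector has strictly larger Krum score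
than `u`, then Krum outputs `u`; hence with `E[v̄] = g ≠ 0` and `ε > 0`, the
expected Krum output `E[Krum(V ∪ U)] = E[-ε v̄]` satisfies
`⟨g, E[Krum(V ∪ U)]⟩ = -ε‖g‖² < 0`. -/
theorem krum_outputs_byzantine
    {Ω : Type*} [MeasureSpace Ω] [IsProbabilityMeasure (volume : Measure Ω)]
    {d N q : ℕ} (hN : 3 ≤ N) (hqN : N - 2 ≤ q)
    (v : Fin N → Ω → EuclideanSpace ℝ (Fin d))
    (vbar : Ω → EuclideanSpace ℝ (Fin d))
    (hvbar : vbar = fun ω => ((N : ℝ))⁻¹ • ∑ i, v i ω)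
    (hint : Integrable vbar (volume : Measure Ω))
    (g : EuclideanSpace ℝ (Fin d)) (hg : ∫ ω : Ω, vbar ω ∂(volume : Measure Ω) = g) (hg0 : g ≠ 0)
    (ε : ℝ) (hε : 0 < ε)
    (w : Ω → Fin (N + q) → EuclideanSpace ℝ (Fin d))
    (hw : w = fun ω (i : Fin (N + q)) =>
      if h : (i : ℕ) < N then v ⟨i, h⟩ ω else (-ε) • vbar ω)
    (hscore : ∀ ω, ∀ i : Fin (N + q), N ≤ (i : ℕ) →
      ∀ j : Fin (N + q), (j : ℕ) < N →
        krumScore q (w ω) i < krumScore q (w ω) j)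
    (krumExp : EuclideanSpace ℝ (Fin d))
    (hkrumExp : krumExp = ∫ ω : Ω, (-ε) • vbar ω ∂(volume : Measure Ω)) :
    (∀ ω, ∃ k : Fin (N + q),
        (∀ j, krumScore q (w ω) k ≤ krumScore q (w ω) j) ∧
        w ω k = (-ε) • vbar ω) ∧
    (inner ℝ g krumExp : ℝ) = -ε * ‖g‖ ^ 2 ∧
    (inner ℝ g krumExp : ℝ) < 0 := by
  have hq1 : 1 ≤ q := le_trans (by omega) hqN
  refine ⟨?_, ?_, ?_⟩
  · intro ω
    obtain ⟨k, -, hk⟩ := Finset.exists_min_image (Finset.univ : Finset (Fin (N + q)))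
      (krumScore q (w ω)) ⟨⟨0, by omega⟩, Finset.mem_univ _⟩
    refine ⟨k, fun j => hk j (Finset.mem_univ j), ?_⟩
    have hkN : N ≤ (k : ℕ) := by
      by_contra h
      push_neg at h
      have hb : (⟨N, by omega⟩ : Fin (N + q)).1 < N + q := by omega
      have := hscore ω ⟨N, by omega⟩ (le_refl N) k h
      have := hk ⟨N, by omega⟩ (Finset.mem_univ _)
      linarith
    rw [hw]
    simp only [dif_neg (not_lt.mpr hkN)]
  · have : krumExp = (-ε) • g := by
      rw [hkrumExp, integral_smul, hg]
    rw [this, real_inner_smul_right, real_inner_self_eq_norm_sq]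
  · have : krumExp = (-ε) • g := by
      rw [hkrumExp, integral_smul, hg]
    rw [this, real_inner_smul_right, real_inner_self_eq_norm_sq]
    have h1 : 0 < ‖g‖ := norm_pos_iff.mpr hg0
    have := mul_pos hε (pow_pos h1 2)
    linarith
end
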